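/- Let δ be a semi-flower automaton with state set Q, nonempty alphabet A, and initial-final state q0. Then the set BPI of branch points going in is empty if and only if A has exactly one element. -/

import Mathlib

/-- Extension of the transition function `δ : Q → A → Q` to words (lists of letters):
`δ*(q, ε) = q` and `δ*(q, a·w) = δ*(δ(q,a), w)`. -/
def deltaStar {Q A : Type*} (δ : Q → A → Q) : Q → List A → Q
  | q, [] => q
  | q, a :: w => deltaStar δ (δ q a) w

/-- `δ` (with initial-final state `q0`) is a semi-flower automaton: every state is
accessible and coaccessible, and every cycle passes through `q0` (i.e. for every
nonempty word `w` labelling a cycle at `q`, some prefix of `w` leads from `q` to `q0`). -/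
def IsSFA {Q A : Type*} (δ : Q → A → Q) (q0 : Q) : Prop :=
  (∀ q : Q, ∃ w : List A, deltaStar δ q0 w = q) ∧
  (∀ q : Q, ∃ w : List A, deltaStar δ q w = q0) ∧
  (∀ (q : Q) (w : List A), w ≠ [] → deltaStar δ q w = q →
    ∃ u : List A, u <+: w ∧ deltaStar δ q u = q0)

/-- A map `f : Q → Q` is a circular permutation if it is bijective and for all
`p q : Q` there is `k : ℕ` with `f^[k] p = q`. -/
def IsCircularPerm {Q : Type*} (f : Q → Q) : Prop :=
  Function.Bijective f ∧ ∀ p q : Q, ∃ k : ℕ, f^[k] p = q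

/-- The set of branch points going in (bpis): states that are the target of two
distinct transitions. -/
def BPI {Q A : Type*} (δ : Q → A → Q) : Set Q :=
  {q | ∃ pb₁ pb₂ : Q × A, pb₁ ≠ pb₂ ∧ δ pb₁.1 pb₁.2 = q ∧ δ pb₂.1 pb₂.2 = q}


/-- In a semi-flower automaton over a nonempty alphabet, there are no bpis iff the
alphabet has exactly one element. -/
theorem sfa_bpi_empty_iff_card_alphabet_one {Q A : Type*} [Fintype Q] [Nonempty Q]
    [Fintype A] [Nonempty A]
    (δ : Q → A → Q) (q0 : Q) (hSFA : IsSFA δ q0) :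
    BPI δ = ∅ ↔ Fintype.card A = 1 := by
  obtain ⟨hacc, hcoacc, -⟩ := hSFA
  constructor
  · intro hBPI
    -- the map (p,b) ↦ δ p b is injective
    have hinj : Function.Injective (fun pb : Q × A => δ pb.1 pb.2) := by
      intro pb₁ pb₂ h
      by_contra hne
      have hmem : δ pb₁.1 pb₁.2 ∈ BPI δ := ⟨pb₁, pb₂, hne, rfl, h.symm⟩
      rw [hBPI] at hmem
      exact hmem
    have hle : Fintype.card (Q × A) ≤ Fintype.card Q :=
      Fintype.card_le_of_injective _ hinj
    rw [Fintype.card_prod] at hle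
    have hQ : 0 < Fintype.card Q := Fintype.card_pos
    have hA : 1 ≤ Fintype.card A := Fintype.card_pos
    nlinarith
  · intro hcard
    have hsub : Subsingleton A := Fintype.card_le_one_iff_subsingleton.mp hcard.le
    obtain ⟨a⟩ := (inferInstance : Nonempty A)
    set f : Q → Q := fun q => δ q a with hf
    -- deltaStar is iteration of f
    have hstar : ∀ (w : List A) (q : Q), deltaStar δ q w = f^[w.length] q := by
      intro w
      induction w with
      | nil => intro q; rfl
      | cons b w ih =>
        intro q
        have hb : b = a := Subsingleton.elim b a
        simp only [deltaStar, ih, List.length_cons, Function.iterate_succ_apply, hb]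
        rfl
    -- find n ≥ 1 with f^[n] q0 = q0
    obtain ⟨w, hw⟩ := hcoacc (f q0)
    rw [hstar] at hw
    set m := w.length
    have hcyc : f^[m + 1] q0 = q0 := by
      rw [Function.iterate_succ_apply]; exact hw
    -- f^[m+1] = id on Q
    have hid : ∀ q : Q, f^[m + 1] q = q := by
      intro q
      obtain ⟨v, hv⟩ := hacc q
      rw [hstar] at hv
      calc f^[m + 1] q = f^[m + 1] (f^[v.length] q0) := by rw [hv]
        _ = f^[m + 1 + v.length] q0 := by rw [← Function.iterate_add_apply]
        _ = f^[v.length] (f^[m + 1] q0) := by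
              rw [← Function.iterate_add_apply, Nat.add_comm]
        _ = f^[v.length] q0 := by rw [hcyc]
        _ = q := hv
    have hfinj : Function.Injective f := by
      intro p q hpq
      have := hid p
      rw [Function.iterate_succ_apply, hpq, ← Function.iterate_succ_apply, hid q] at this
      exact this.symm
    ext q
    simp only [Set.mem_empty_iff_false, iff_false]
    rintro ⟨pb₁, pb₂, hne, h₁, h₂⟩
    apply hne
    have hb₁ : pb₁.2 = a := Subsingleton.elim _ _
    have hb₂ : pb₂.2 = a := Subsingleton.elim _ _
    have : f pb₁.1 = f pb₂.1 := by
      have h := h₁.trans h₂.symm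
      rwa [hb₁, hb₂] at h
    exact Prod.ext (hfinj this) (hb₁.trans hb₂.symm)
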